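/- Let G = U(T₁,…,T_g) and G₁ = U(T̃₁,T₂,…,T_g) be unicyclic graphs of order n with girth g obtained by attaching trees T_i at the vertices u_i of a common cycle C_g, differing only in the first branch. If |V(T₁)| = |V(T̃₁)|, W(T₁) ≥ W(T̃₁), and d_{T₁}(u₁) ≥ d_{T̃₁}(u₁), then W(G) ≥ W(G₁), with equality if and only if W(T₁) = W(T̃₁) and d_{T₁}(u₁) = d_{T̃₁}(u₁). -/

import Mathlib

open SimpleGraph Finset

noncomputable def wienerIndex {V : Type*} [Fintype V] (G : SimpleGraph V) : ℕ :=
  (∑ u : V, ∑ v : V, G.dist u v) / 2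

noncomputable def vertexDist {V : Type*} [Fintype V] (G : SimpleGraph V) (u : V) : ℕ :=
  ∑ v : V, G.dist u v

/-- The unicyclic graph `U(T₁,…,T_g)`: from the cycle `C_g` on vertices `u₀,…,u_{g-1}`,
identify `u_i` with the root `r i` of the tree `T i`.  The vertex set is the disjoint
union `Σ i, V i`; the edges are the tree edges inside each branch together with the cycle
edges joining consecutive roots. -/
def cycleTrees {g : ℕ} [NeZero g] {V : Fin g → Type*} (T : ∀ i, SimpleGraph (V i)) (r : ∀ i, V i) :
    SimpleGraph (Σ i, V i) :=
  SimpleGraph.fromRel fun a b =>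
    (∃ (i : Fin g) (x y : V i), a = ⟨i, x⟩ ∧ b = ⟨i, y⟩ ∧ (T i).Adj x y) ∨
    (∃ i : Fin g, a = ⟨i, r i⟩ ∧ b = ⟨i + 1, r (i + 1)⟩)

namespace CycleTreesAux

variable {g : ℕ} [NeZero g] {V : Fin g → Type*}

/-- Projection of the disjoint union onto branch `0`; vertices of other branches
are sent to the root `r 0`. -/
def proj (r : ∀ i, V i) (u : Σ i, V i) : V 0 :=
  if h : u.1 = 0 then h ▸ u.2 else r 0

/-- Collapse branch `0` to its root; other branches are fixed. -/
def collapse (r : ∀ i, V i) (u : Σ i, V i) : Σ i, V i :=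
  if u.1 = 0 then ⟨0, r 0⟩ else u

@[simp] lemma proj_zero (r : ∀ i, V i) (x : V 0) : proj r ⟨0, x⟩ = x := dif_pos rfl

@[simp] lemma proj_ne (r : ∀ i, V i) {i : Fin g} (h : i ≠ 0) (x : V i) :
    proj r ⟨i, x⟩ = r 0 := dif_neg h

@[simp] lemma collapse_zero (r : ∀ i, V i) (x : V 0) :
    collapse r ⟨0, x⟩ = ⟨0, r 0⟩ := if_pos rfl

@[simp] lemma collapse_ne (r : ∀ i, V i) {i : Fin g} (h : i ≠ 0) (x : V i) :
    collapse r ⟨i, x⟩ = ⟨i, x⟩ := if_neg h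

@[simp] lemma proj_root (r : ∀ i, V i) (i : Fin g) : proj r ⟨i, r i⟩ = r 0 := by
  by_cases h : i = 0
  · subst h; exact proj_zero r _
  · exact proj_ne r h _

@[simp] lemma collapse_root (r : ∀ i, V i) (i : Fin g) :
    collapse r ⟨i, r i⟩ = ⟨i, r i⟩ := by
  by_cases h : i = 0
  · subst h; exact collapse_zero r _
  · exact collapse_ne r h _

lemma one_ne_zero_fin (hg : 2 ≤ g) : (1 : Fin g) ≠ 0 := by
  intro h
  rw [Fin.ext_iff, Fin.val_one', Fin.val_zero] at h
  rw [Nat.mod_eq_of_lt (by omega)] at h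
  omega

lemma ne_add_one (hg : 2 ≤ g) (i : Fin g) : i ≠ i + 1 := by
  intro h
  nth_rewrite 1 [← add_zero i] at h
  have h1 : (0 : Fin g) = 1 := add_left_cancel h
  exact one_ne_zero_fin hg h1.symm

/-- The embedding of a branch into the unicyclic graph. -/
def branchHom (S : ∀ i, SimpleGraph (V i)) (r : ∀ i, V i) (i : Fin g) :
    S i →g cycleTrees S r where
  toFun x := ⟨i, x⟩
  map_rel' := by
    intro x y h
    simp only [cycleTrees, SimpleGraph.fromRel_adj]
    exact ⟨fun c => h.ne (sigma_mk_injective c), Or.inl (Or.inl ⟨i, x, y, rfl, rfl, h⟩)⟩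

lemma adj_cycle (S : ∀ i, SimpleGraph (V i)) (r : ∀ i, V i) (hg : 2 ≤ g) (i : Fin g) :
    (cycleTrees S r).Adj ⟨i, r i⟩ ⟨i + 1, r (i + 1)⟩ := by
  simp only [cycleTrees, SimpleGraph.fromRel_adj]
  exact ⟨fun c => ne_add_one hg i (congrArg Sigma.fst c), Or.inl (Or.inr ⟨i, rfl, rfl⟩)⟩

open Fin.NatCast in
lemma cycleTrees_connected (S : ∀ i, SimpleGraph (V i)) (r : ∀ i, V i) (hg : 2 ≤ g)
    (hc : ∀ i, (S i).Connected) : (cycleTrees S r).Connected := by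
  have hroot : ∀ k : ℕ, (cycleTrees S r).Reachable ⟨0, r 0⟩ ⟨(k : Fin g), r (k : Fin g)⟩ := by
    intro k
    induction k with
    | zero =>
        rw [Nat.cast_zero]
    | succ n ih =>
        have h2 : ((n + 1 : ℕ) : Fin g) = (n : Fin g) + 1 := by push_cast; ring
        rw [h2]
        exact ih.trans (adj_cycle S r hg (n : Fin g)).reachable
  have hall : ∀ u : Σ i, V i, (cycleTrees S r).Reachable ⟨0, r 0⟩ u := by
    rintro ⟨i, x⟩
    have h1 := hroot i.val
    rw [Fin.cast_val_eq_self] at h1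
    exact h1.trans (Reachable.map (branchHom S r i) ((hc i).preconnected (r i) x))
  rw [connected_iff]
  exact ⟨fun u v => (hall u).symm.trans (hall v), ⟨⟨0, r 0⟩⟩⟩

lemma dist_branch_le (S : ∀ i, SimpleGraph (V i)) (r : ∀ i, V i) (i : Fin g)
    (hc : (S i).Connected) (x y : V i) :
    (cycleTrees S r).dist ⟨i, x⟩ ⟨i, y⟩ ≤ (S i).dist x y := by
  obtain ⟨p, hp⟩ := hc.exists_walk_length_eq_dist x y
  calc (cycleTrees S r).dist ⟨i, x⟩ ⟨i, y⟩ ≤ (p.map (branchHom S r i)).length :=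
        SimpleGraph.dist_le _
    _ = p.length := SimpleGraph.Walk.length_map _ _
    _ = _ := hp

lemma adj_cases_aux {S S' : ∀ i, SimpleGraph (V i)} {r : ∀ i, V i}
    (hSS' : ∀ i, i ≠ 0 → S i = S' i) (hg : 2 ≤ g) {a b : Σ i, V i} (hne : a ≠ b)
    (hrel : (∃ (i : Fin g) (x y : V i), a = ⟨i, x⟩ ∧ b = ⟨i, y⟩ ∧ (S i).Adj x y) ∨
      (∃ i : Fin g, a = ⟨i, r i⟩ ∧ b = ⟨i + 1, r (i + 1)⟩)) :
    ((S 0).Adj (proj r a) (proj r b) ∧ collapse r a = collapse r b) ∨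
      (proj r a = proj r b ∧ (cycleTrees S' r).Adj (collapse r a) (collapse r b)) := by
  rcases hrel with ⟨i, x, y, ha, hb, hxy⟩ | ⟨i, ha, hb⟩
  · subst ha; subst hb
    by_cases hi : i = 0
    · subst hi
      left
      refine ⟨by simpa using hxy, by simp⟩
    · right
      refine ⟨by simp [proj_ne r hi], ?_⟩
      rw [collapse_ne r hi, collapse_ne r hi]
      simp only [cycleTrees, SimpleGraph.fromRel_adj]
      exact ⟨hne, Or.inl (Or.inl ⟨i, x, y, rfl, rfl, (hSS' i hi) ▸ hxy⟩)⟩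
  · subst ha; subst hb
    right
    refine ⟨by simp, ?_⟩
    rw [collapse_root, collapse_root]
    exact adj_cycle S' r hg i

lemma adj_cases {S S' : ∀ i, SimpleGraph (V i)} {r : ∀ i, V i}
    (hSS' : ∀ i, i ≠ 0 → S i = S' i) (hg : 2 ≤ g) {a b : Σ i, V i}
    (h : (cycleTrees S r).Adj a b) :
    ((S 0).Adj (proj r a) (proj r b) ∧ collapse r a = collapse r b) ∨
      (proj r a = proj r b ∧ (cycleTrees S' r).Adj (collapse r a) (collapse r b)) := by
  rw [cycleTrees, SimpleGraph.fromRel_adj] at h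
  obtain ⟨hne, hrel | hrel⟩ := h
  · exact adj_cases_aux hSS' hg hne hrel
  · rcases adj_cases_aux hSS' hg (Ne.symm hne) hrel with ⟨h1, h2⟩ | ⟨h1, h2⟩
    · exact Or.inl ⟨h1.symm, h2.symm⟩
    · exact Or.inr ⟨h1.symm, h2.symm⟩

lemma walk_lower {S S' : ∀ i, SimpleGraph (V i)} {r : ∀ i, V i}
    (hSS' : ∀ i, i ≠ 0 → S i = S' i) (hg : 2 ≤ g)
    (hS0 : (S 0).Connected) (hH : (cycleTrees S' r).Connected)
    {u v : Σ i, V i} (w : (cycleTrees S r).Walk u v) :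
    (S 0).dist (proj r u) (proj r v)
      + (cycleTrees S' r).dist (collapse r u) (collapse r v) ≤ w.length := by
  induction w with
  | nil => simp
  | @cons u u' v h w ih =>
      rw [SimpleGraph.Walk.length_cons]
      rcases adj_cases hSS' hg h with ⟨hadj, hcol⟩ | ⟨hproj, hadj⟩
      · have hone : (S 0).dist (proj r u) (proj r u') = 1 := by
          rw [SimpleGraph.dist_eq_one_iff_adj]; exact hadj
        have h1 : (S 0).dist (proj r u) (proj r v)
            ≤ (S 0).dist (proj r u) (proj r u') + (S 0).dist (proj r u') (proj r v) :=
          hS0.dist_triangle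
        rw [hcol]
        omega
      · have hone : (cycleTrees S' r).dist (collapse r u) (collapse r u') = 1 := by
          rw [SimpleGraph.dist_eq_one_iff_adj]; exact hadj
        have h1 : (cycleTrees S' r).dist (collapse r u) (collapse r v)
            ≤ (cycleTrees S' r).dist (collapse r u) (collapse r u')
              + (cycleTrees S' r).dist (collapse r u') (collapse r v) :=
          hH.dist_triangle
        rw [hproj]
        omega

lemma dist_lower {S S' : ∀ i, SimpleGraph (V i)} {r : ∀ i, V i}
    (hSS' : ∀ i, i ≠ 0 → S i = S' i) (hg : 2 ≤ g)
    (hS0 : (S 0).Connected) (hG : (cycleTrees S r).Connected)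
    (hH : (cycleTrees S' r).Connected) (u v : Σ i, V i) :
    (S 0).dist (proj r u) (proj r v)
      + (cycleTrees S' r).dist (collapse r u) (collapse r v)
        ≤ (cycleTrees S r).dist u v := by
  obtain ⟨p, hp⟩ := hG.exists_walk_length_eq_dist u v
  exact hp ▸ walk_lower hSS' hg hS0 hH p

lemma dist_eq_of_fixed {S S' : ∀ i, SimpleGraph (V i)} {r : ∀ i, V i}
    (hSS' : ∀ i, i ≠ 0 → S i = S' i) (hg : 2 ≤ g)
    (hS0 : (S 0).Connected) (hS'0 : (S' 0).Connected)
    (hG : (cycleTrees S r).Connected) (hH : (cycleTrees S' r).Connected)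
    {u v : Σ i, V i} (hu : collapse r u = u) (hv : collapse r v = v) :
    (cycleTrees S r).dist u v = (cycleTrees S' r).dist u v := by
  have hSS'' : ∀ i, i ≠ 0 → S' i = S i := fun i hi => (hSS' i hi).symm
  have h1 := dist_lower hSS' hg hS0 hG hH u v
  have h2 := dist_lower hSS'' hg hS'0 hH hG u v
  rw [hu, hv] at h1 h2
  omega

lemma dist_zero_eq {S S' : ∀ i, SimpleGraph (V i)} {r : ∀ i, V i}
    (hSS' : ∀ i, i ≠ 0 → S i = S' i) (hg : 2 ≤ g)
    (hS0 : (S 0).Connected) (hG : (cycleTrees S r).Connected)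
    (hH : (cycleTrees S' r).Connected) (a b : V 0) :
    (cycleTrees S r).dist ⟨0, a⟩ ⟨0, b⟩ = (S 0).dist a b := by
  refine le_antisymm (dist_branch_le S r 0 hS0 a b) ?_
  have h1 := dist_lower hSS' hg hS0 hG hH ⟨0, a⟩ ⟨0, b⟩
  simpa [SimpleGraph.dist_self] using h1

lemma dist_cross {S S' : ∀ i, SimpleGraph (V i)} {r : ∀ i, V i}
    (hSS' : ∀ i, i ≠ 0 → S i = S' i) (hg : 2 ≤ g)
    (hS0 : (S 0).Connected) (hS'0 : (S' 0).Connected)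
    (hG : (cycleTrees S r).Connected) (hH : (cycleTrees S' r).Connected)
    (a : V 0) {j : Fin g} (hj : j ≠ 0) (y : V j) :
    (cycleTrees S r).dist ⟨0, a⟩ ⟨j, y⟩
      = (S 0).dist a (r 0) + (cycleTrees S r).dist ⟨0, r 0⟩ ⟨j, y⟩ := by
  refine le_antisymm ?_ ?_
  · have htri : (cycleTrees S r).dist ⟨0, a⟩ ⟨j, y⟩
        ≤ (cycleTrees S r).dist ⟨0, a⟩ ⟨0, r 0⟩ + (cycleTrees S r).dist ⟨0, r 0⟩ ⟨j, y⟩ :=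
      hG.dist_triangle
    have hle := dist_branch_le S r 0 hS0 a (r 0)
    omega
  · have h1 := dist_lower hSS' hg hS0 hG hH ⟨0, a⟩ ⟨j, y⟩
    rw [proj_zero, proj_ne r hj, collapse_zero, collapse_ne r hj] at h1
    have h2 : (cycleTrees S r).dist ⟨0, r 0⟩ ⟨j, y⟩
        = (cycleTrees S' r).dist ⟨0, r 0⟩ ⟨j, y⟩ :=
      dist_eq_of_fixed hSS' hg hS0 hS'0 hG hH (collapse_zero r (r 0)) (collapse_ne r hj y)
    omega

lemma master_cross {S S' : ∀ i, SimpleGraph (V i)} {r : ∀ i, V i}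
    (hSS' : ∀ i, i ≠ 0 → S i = S' i) (hg : 2 ≤ g)
    (hS0 : (S 0).Connected) (hS'0 : (S' 0).Connected)
    (hG : (cycleTrees S r).Connected) (hH : (cycleTrees S' r).Connected)
    (a : V 0) {j : Fin g} (hj : j ≠ 0) (y : V j) :
    (cycleTrees S r).dist ⟨0, a⟩ ⟨j, y⟩ + (S' 0).dist (proj r ⟨0, a⟩) (proj r ⟨j, y⟩)
      = (cycleTrees S' r).dist ⟨0, a⟩ ⟨j, y⟩ + (S 0).dist (proj r ⟨0, a⟩) (proj r ⟨j, y⟩) := by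
  have hSS'' : ∀ i, i ≠ 0 → S' i = S i := fun i hi => (hSS' i hi).symm
  have e1 := dist_cross hSS' hg hS0 hS'0 hG hH a hj y
  have e2 := dist_cross hSS'' hg hS'0 hS0 hH hG a hj y
  have e3 : (cycleTrees S r).dist ⟨0, r 0⟩ ⟨j, y⟩
      = (cycleTrees S' r).dist ⟨0, r 0⟩ ⟨j, y⟩ :=
    dist_eq_of_fixed hSS' hg hS0 hS'0 hG hH (collapse_zero r (r 0)) (collapse_ne r hj y)
  rw [proj_zero, proj_ne r hj]
  omega

lemma dist_master {S S' : ∀ i, SimpleGraph (V i)} {r : ∀ i, V i}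
    (hSS' : ∀ i, i ≠ 0 → S i = S' i) (hg : 2 ≤ g)
    (hS : ∀ i, (S i).Connected) (hS' : ∀ i, (S' i).Connected) (u v : Σ i, V i) :
    (cycleTrees S r).dist u v + (S' 0).dist (proj r u) (proj r v)
      = (cycleTrees S' r).dist u v + (S 0).dist (proj r u) (proj r v) := by
  have hG := cycleTrees_connected S r hg hS
  have hH := cycleTrees_connected S' r hg hS'
  have hSS'' : ∀ i, i ≠ 0 → S' i = S i := fun i hi => (hSS' i hi).symm
  obtain ⟨i, x⟩ := u; obtain ⟨j, y⟩ := v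
  by_cases hi : i = 0 <;> by_cases hj : j = 0
  · subst hi; subst hj
    rw [dist_zero_eq hSS' hg (hS 0) hG hH, dist_zero_eq hSS'' hg (hS' 0) hH hG,
      proj_zero, proj_zero]
    omega
  · subst hi
    exact master_cross hSS' hg (hS 0) (hS' 0) hG hH x hj y
  · subst hj
    have key := master_cross hSS' hg (hS 0) (hS' 0) hG hH y hi x
    have c1 : (cycleTrees S r).dist ⟨i, x⟩ ⟨0, y⟩ = (cycleTrees S r).dist ⟨0, y⟩ ⟨i, x⟩ :=
      SimpleGraph.dist_comm
    have c2 : (cycleTrees S' r).dist ⟨i, x⟩ ⟨0, y⟩ = (cycleTrees S' r).dist ⟨0, y⟩ ⟨i, x⟩ :=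
      SimpleGraph.dist_comm
    have c3 : (S 0).dist (proj r ⟨i, x⟩) (proj r ⟨0, y⟩)
        = (S 0).dist (proj r ⟨0, y⟩) (proj r ⟨i, x⟩) := SimpleGraph.dist_comm
    have c4 : (S' 0).dist (proj r ⟨i, x⟩) (proj r ⟨0, y⟩)
        = (S' 0).dist (proj r ⟨0, y⟩) (proj r ⟨i, x⟩) := SimpleGraph.dist_comm
    rw [c1, c2, c3, c4]
    exact key
  · have e3 : (cycleTrees S r).dist ⟨i, x⟩ ⟨j, y⟩
        = (cycleTrees S' r).dist ⟨i, x⟩ ⟨j, y⟩ :=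
      dist_eq_of_fixed hSS' hg (hS 0) (hS' 0) hG hH (collapse_ne r hi x) (collapse_ne r hj y)
    rw [proj_ne r hi, proj_ne r hj, e3, SimpleGraph.dist_self, SimpleGraph.dist_self]

section Sums

variable [∀ i, Fintype (V i)]

lemma sum_split (f : (Σ i, V i) → ℕ) :
    ∑ u : Σ i, V i, f u
      = (∑ a : V 0, f ⟨0, a⟩)
        + ∑ i ∈ ({0}ᶜ : Finset (Fin g)), ∑ x : V i, f ⟨i, x⟩ := by
  rw [← Finset.univ_sigma_univ, Finset.sum_sigma]
  exact Fintype.sum_eq_add_sum_compl 0 _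

lemma sum_proj (S0 : SimpleGraph (V 0)) (r : ∀ i, V i) :
    ∑ u : Σ i, V i, ∑ v : Σ i, V i, S0.dist (proj r u) (proj r v)
      = (∑ a : V 0, ∑ b : V 0, S0.dist a b)
        + 2 * (∑ i ∈ ({0}ᶜ : Finset (Fin g)), Fintype.card (V i))
            * (∑ b : V 0, S0.dist (r 0) b) := by
  set N : ℕ := ∑ i ∈ ({0}ᶜ : Finset (Fin g)), Fintype.card (V i) with hN
  have inner : ∀ c : V 0, ∑ v : Σ i, V i, S0.dist c (proj r v)
      = (∑ b : V 0, S0.dist c b) + N * S0.dist c (r 0) := by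
    intro c
    rw [sum_split (fun v => S0.dist c (proj r v))]
    have h2 : ∀ i ∈ ({0}ᶜ : Finset (Fin g)),
        ∑ x : V i, S0.dist c (proj r ⟨i, x⟩) = Fintype.card (V i) * S0.dist c (r 0) := by
      intro i hi
      have hi' : i ≠ 0 := by simpa using hi
      simp [proj_ne r hi', Finset.sum_const, Finset.card_univ, mul_comm]
    rw [Finset.sum_congr rfl h2, ← Finset.sum_mul]
    simp [proj_zero, hN]
  rw [sum_split (fun u => ∑ v : Σ i, V i, S0.dist (proj r u) (proj r v))]
  have h1 : ∑ a : V 0, ∑ v : Σ i, V i, S0.dist (proj r ⟨0, a⟩) (proj r v)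
      = (∑ a : V 0, ∑ b : V 0, S0.dist a b) + N * ∑ a : V 0, S0.dist a (r 0) := by
    simp only [proj_zero]
    rw [Finset.sum_congr rfl (fun a _ => inner a), Finset.sum_add_distrib, ← Finset.mul_sum]
  have h2 : ∑ i ∈ ({0}ᶜ : Finset (Fin g)),
        ∑ x : V i, ∑ v : Σ i', V i', S0.dist (proj r ⟨i, x⟩) (proj r v)
      = N * ∑ b : V 0, S0.dist (r 0) b := by
    have key : ∀ i ∈ ({0}ᶜ : Finset (Fin g)),
        ∑ x : V i, ∑ v : Σ i', V i', S0.dist (proj r ⟨i, x⟩) (proj r v)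
          = Fintype.card (V i) * (∑ b : V 0, S0.dist (r 0) b) := by
      intro i hi
      have hi' : i ≠ 0 := by simpa using hi
      simp only [proj_ne r hi']
      rw [Finset.sum_congr rfl (fun x _ => inner (r 0))]
      simp [SimpleGraph.dist_self, Finset.sum_const, Finset.card_univ, mul_comm]
    rw [Finset.sum_congr rfl key, ← Finset.sum_mul]
  rw [h1, h2]
  have hcomm : ∑ a : V 0, S0.dist a (r 0) = ∑ b : V 0, S0.dist (r 0) b :=
    Finset.sum_congr rfl fun a _ => SimpleGraph.dist_comm
  rw [hcomm]
  ring

end Sums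

lemma even_sum_dist {α : Type*} [Fintype α] (X : SimpleGraph α) :
    Even (∑ u : α, ∑ v : α, X.dist u v) := by
  have h : ((∑ u : α, ∑ v : α, X.dist u v : ℕ) : ZMod 2) = 0 := by
    push_cast
    rw [← Finset.sum_product']
    refine Finset.sum_ninvolution (fun p => (p.2, p.1)) ?_ ?_ ?_ ?_
    · intro p
      show ((X.dist p.1 p.2 : ℕ) : ZMod 2) + ((X.dist p.2 p.1 : ℕ) : ZMod 2) = 0
      rw [SimpleGraph.dist_comm (u := p.2)]
      exact CharTwo.add_self_eq_zero _
    · intro p hp hc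
      apply hp
      have h12 : p.2 = p.1 := congrArg Prod.fst hc
      show ((X.dist p.1 p.2 : ℕ) : ZMod 2) = 0
      rw [← h12, SimpleGraph.dist_self, Nat.cast_zero]
    · intro p; exact Finset.mem_univ _
    · intro p; rfl
  rw [ZMod.natCast_eq_zero_iff] at h
  exact even_iff_two_dvd.mpr h

lemma two_mul_wiener {α : Type*} [Fintype α] (X : SimpleGraph α) :
    2 * wienerIndex X = ∑ u : α, ∑ v : α, X.dist u v :=
  Nat.two_mul_div_two_of_even (even_sum_dist X)

end CycleTreesAux

open CycleTreesAux

/-- Corollary 2.2: if the first branch `T 0` is replaced by a tree `T̃` on the same vertex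
set with `W(T 0) ≥ W(T̃)` and `d_{T 0}(u₁) ≥ d_{T̃}(u₁)`, then `W(G) ≥ W(G₁)`, with
equality iff `W(T 0) = W(T̃)` and `d_{T 0}(u₁) = d_{T̃}(u₁)`. -/
theorem wiener_cycleTrees_mono {g : ℕ} [NeZero g] (hg : 3 ≤ g) {V : Fin g → Type*}
    [∀ i, Fintype (V i)] (T : ∀ i, SimpleGraph (V i)) (Ttil : SimpleGraph (V 0))
    (r : ∀ i, V i) (hT : ∀ i, (T i).IsTree) (hTtil : Ttil.IsTree)
    (hW : wienerIndex Ttil ≤ wienerIndex (T 0))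
    (hd : vertexDist Ttil (r 0) ≤ vertexDist (T 0) (r 0)) :
    wienerIndex (cycleTrees (Function.update T 0 Ttil) r) ≤ wienerIndex (cycleTrees T r) ∧
      (wienerIndex (cycleTrees (Function.update T 0 Ttil) r) = wienerIndex (cycleTrees T r) ↔
        wienerIndex Ttil = wienerIndex (T 0) ∧
          vertexDist Ttil (r 0) = vertexDist (T 0) (r 0)) := by
  classical
  set S' : ∀ i, SimpleGraph (V i) := Function.update T 0 Ttil with hS'def
  have hg2 : 2 ≤ g := by omega
  have hS'0 : S' 0 = Ttil := by rw [hS'def]; simp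
  have hSS' : ∀ i, i ≠ 0 → T i = S' i := fun i hi => (Function.update_of_ne hi _ _).symm
  have hconnT : ∀ i, (T i).Connected := fun i => (hT i).isConnected
  have hconnS' : ∀ i, (S' i).Connected := by
    intro i
    by_cases hi : i = 0
    · subst hi; rw [hS'0]; exact hTtil.isConnected
    · rw [← hSS' i hi]; exact hconnT i
  -- the master pointwise identity, summed
  have hsum : (∑ u : Σ i, V i, ∑ v : Σ i, V i, (cycleTrees T r).dist u v)
        + (∑ u : Σ i, V i, ∑ v : Σ i, V i, (S' 0).dist (proj r u) (proj r v))
      = (∑ u : Σ i, V i, ∑ v : Σ i, V i, (cycleTrees S' r).dist u v)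
        + (∑ u : Σ i, V i, ∑ v : Σ i, V i, (T 0).dist (proj r u) (proj r v)) := by
    simp only [← Finset.sum_add_distrib]
    exact Finset.sum_congr rfl fun u _ => Finset.sum_congr rfl fun v _ =>
      dist_master hSS' hg2 hconnT hconnS' u v
  rw [sum_proj (S' 0) r, sum_proj (T 0) r] at hsum
  rw [hS'0] at hsum
  set N : ℕ := ∑ i ∈ ({0}ᶜ : Finset (Fin g)), Fintype.card (V i) with hN
  -- N is positive
  have hN1 : 1 ≤ N := by
    have h1mem : (1 : Fin g) ∈ ({0}ᶜ : Finset (Fin g)) := by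
      simp [one_ne_zero_fin hg2]
    have hcard : 1 ≤ Fintype.card (V 1) :=
      Fintype.card_pos_iff.mpr (hconnT 1).nonempty
    calc 1 ≤ Fintype.card (V 1) := hcard
      _ ≤ N := by rw [hN]; exact Finset.single_le_sum (f := fun i => Fintype.card (V i)) (fun i _ => Nat.zero_le _) h1mem
  -- rewrite all sums as twice the Wiener indices
  rw [← two_mul_wiener (cycleTrees T r), ← two_mul_wiener (cycleTrees S' r),
    ← two_mul_wiener Ttil, ← two_mul_wiener (T 0)] at hsum
  have hvt : (∑ b : V 0, Ttil.dist (r 0) b) = vertexDist Ttil (r 0) := rfl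
  have hv0 : (∑ b : V 0, (T 0).dist (r 0) b) = vertexDist (T 0) (r 0) := rfl
  rw [hvt, hv0] at hsum
  rw [mul_assoc 2 N (vertexDist Ttil (r 0)), mul_assoc 2 N (vertexDist (T 0) (r 0))] at hsum
  have hcd : N * vertexDist Ttil (r 0) ≤ N * vertexDist (T 0) (r 0) :=
    Nat.mul_le_mul_left _ hd
  set c : ℕ := N * vertexDist Ttil (r 0) with hc
  set d : ℕ := N * vertexDist (T 0) (r 0) with hdd
  refine ⟨by omega, ?_, ?_⟩
  · intro he
    have h1 : wienerIndex Ttil = wienerIndex (T 0) := by omega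
    have h2 : c = d := by omega
    refine ⟨h1, ?_⟩
    exact Nat.eq_of_mul_eq_mul_left (by omega) h2
  · rintro ⟨h1, h2⟩
    have h3 : c = d := by rw [hc, hdd, h2]
    omega
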